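/- For every prime p with p ≥ 66 there exists t ∈ ℤ/pℤ such that t ∉ {−2, −1, 0, 1, 2, 3, 4}, 2t ∉ {−1, 1}, 3t ∉ {1, 2}, 4t ∉ {1, 3}, and ((t−9)(t−1)/p) = ((9t−1)(t−1)/p) = −1. -/

import Mathlib

open Finset

section Aux

variable {p : ℕ} [Fact p.Prime]

local notation "χ" => quadraticChar (ZMod p)

lemma chi_le_one (a : ZMod p) : χ a ≤ 1 := by
  rcases eq_or_ne a 0 with h | h
  · simp [h, quadraticChar_zero]
  · rcases quadraticChar_dichotomy h with h' | h' <;> omega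

lemma neg_one_le_chi (a : ZMod p) : -1 ≤ χ a := by
  rcases eq_or_ne a 0 with h | h
  · simp [h, quadraticChar_zero]
  · rcases quadraticChar_dichotomy h with h' | h' <;> omega

/-- Key character sum: `∑ x, χ(x(x+c)) = -1` for `c ≠ 0`. -/
lemma sum_chi_mul_add (hc2 : ringChar (ZMod p) ≠ 2) (c : ZMod p) (hc : c ≠ 0) :
    ∑ x : ZMod p, χ (x * (x + c)) = -1 := by
  have h0 : ∑ x : ZMod p, χ (x * (x + c)) =
      ∑ x ∈ Finset.univ.erase (0 : ZMod p), χ (x * (x + c)) := by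
    rw [Finset.sum_erase]
    simp [quadraticChar_zero]
  rw [h0]
  have hstep : ∑ x ∈ Finset.univ.erase (0 : ZMod p), χ (x * (x + c)) =
      ∑ u ∈ Finset.univ.erase (1 : ZMod p), χ u := by
    refine Finset.sum_nbij' (fun x => 1 + c * x⁻¹) (fun u => c * (u - 1)⁻¹) ?_ ?_ ?_ ?_ ?_
    · intro x hx
      simp only [Finset.mem_erase, Finset.mem_univ, and_true] at hx ⊢
      intro h
      have : c * x⁻¹ = 0 := by linear_combination h
      rcases mul_eq_zero.mp this with h' | h'
      · exact hc h'
      · exact hx (inv_eq_zero.mp h')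
    · intro u hu
      simp only [Finset.mem_erase, Finset.mem_univ, and_true] at hu ⊢
      intro h
      rcases mul_eq_zero.mp h with h' | h'
      · exact hc h'
      · exact hu (by have := inv_eq_zero.mp h'; linear_combination this)
    · intro x hx
      simp only [Finset.mem_erase, Finset.mem_univ, and_true] at hx
      show c * (1 + c * x⁻¹ - 1)⁻¹ = x
      have h1 : (1 : ZMod p) + c * x⁻¹ - 1 = c * x⁻¹ := by ring
      rw [h1, mul_inv, inv_inv]
      field_simp
    · intro u hu
      simp only [Finset.mem_erase, Finset.mem_univ, and_true] at hu
      have hu' : u - 1 ≠ 0 := sub_ne_zero.mpr hu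
      show 1 + c * (c * (u - 1)⁻¹)⁻¹ = u
      rw [mul_inv, inv_inv]
      field_simp
      ring
    · intro x hx
      simp only [Finset.mem_erase, Finset.mem_univ, and_true] at hx
      have key : x * (x + c) = x ^ 2 * (1 + c * x⁻¹) := by
        field_simp
      rw [key, map_mul, quadraticChar_sq_one' hx, one_mul]
  rw [hstep, Finset.sum_erase_eq_sub (Finset.mem_univ _), quadraticChar_sum_zero hc2,
    map_one]
  ring

/-- `∑ x, χ((x-a)(x-b)) = -1` for `a ≠ b`. -/
lemma sum_chi_sub_sub (hc2 : ringChar (ZMod p) ≠ 2) (a b : ZMod p) (hab : a ≠ b) :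
    ∑ x : ZMod p, χ ((x - a) * (x - b)) = -1 := by
  have := sum_chi_mul_add hc2 (a - b) (sub_ne_zero.mpr hab)
  rw [← this]
  refine Fintype.sum_equiv (Equiv.subRight a) _ _ fun x => ?_
  simp only [Equiv.subRight_apply]
  congr 1
  ring

end Aux

/-- The Legendre symbol `(a / p)` of an element `a : ZMod p`. -/
def legSym (p : ℕ) [Fact p.Prime] (a : ZMod p) : ℤ := legendreSym p a.val

set_option maxHeartbeats 1000000 in
theorem exists_t_for_seven_p (p : ℕ) [Fact p.Prime] (hp : 66 ≤ p) :
    ∃ t : ZMod p, t ∉ ({-2, -1, 0, 1, 2, 3, 4} : Set (ZMod p)) ∧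
      2 * t ∉ ({-1, 1} : Set (ZMod p)) ∧
      3 * t ∉ ({1, 2} : Set (ZMod p)) ∧
      4 * t ∉ ({1, 3} : Set (ZMod p)) ∧
      legSym p ((t - 9) * (t - 1)) = -1 ∧ legSym p ((9 * t - 1) * (t - 1)) = -1 := by
  have hc2 : ringChar (ZMod p) ≠ 2 := by
    rw [ZMod.ringChar_zmod_n]; omega
  have hpp : p.Prime := Fact.out
  -- nonzero numerals
  have hnz : ∀ n : ℕ, 0 < n → n < 66 → ((n : ZMod p) ≠ 0) := by
    intro n h1 h2 h
    rw [ZMod.natCast_eq_zero_iff] at h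
    have := Nat.le_of_dvd h1 h
    omega
  have h2 : (2 : ZMod p) ≠ 0 := by
    have := hnz 2 (by norm_num) (by norm_num); exact_mod_cast this
  have h3 : (3 : ZMod p) ≠ 0 := by
    have := hnz 3 (by norm_num) (by norm_num); exact_mod_cast this
  have h4 : (4 : ZMod p) ≠ 0 := by
    have := hnz 4 (by norm_num) (by norm_num); exact_mod_cast this
  have h8 : (8 : ZMod p) ≠ 0 := by
    have := hnz 8 (by norm_num) (by norm_num); exact_mod_cast this
  have h9 : (9 : ZMod p) ≠ 0 := by
    have := hnz 9 (by norm_num) (by norm_num); exact_mod_cast this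
  have h80 : (80 : ZMod p) ≠ 0 := by
    intro h
    have h' : ((80 : ℕ) : ZMod p) = 0 := by exact_mod_cast h
    rw [ZMod.natCast_eq_zero_iff] at h'
    have hle := Nat.le_of_dvd (by norm_num) h'
    interval_cases p <;> first | omega | (exfalso; norm_num at hpp)
  have h91 : (9 : ZMod p) ≠ 1 := fun h => h8 (by linear_combination h)
  have h99 : (9 : ZMod p) * 9⁻¹ = 1 := mul_inv_cancel₀ h9
  have h9i1 : (9 : ZMod p)⁻¹ ≠ 1 := by
    intro h; exact h91 (by rw [inv_eq_one] at h; exact h)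
  have h9ne : (9 : ZMod p) ≠ 9⁻¹ := by
    intro h
    have h81 : (9 : ZMod p) * 9 = 1 := by rw [← h99]; rw [← h]
    exact h80 (by linear_combination h81)
  have hχ9 : quadraticChar (ZMod p) (9 : ZMod p) = 1 := by
    have : ((3 : ZMod p) ^ 2) = 9 := by norm_num
    rw [← this]; exact quadraticChar_sq_one' h3
  -- the three character sums
  have hSf : ∑ t : ZMod p, quadraticChar (ZMod p) ((t - 9) * (t - 1)) = -1 :=
    sum_chi_sub_sub hc2 9 1 h91
  have hSg : ∑ t : ZMod p, quadraticChar (ZMod p) ((9 * t - 1) * (t - 1)) = -1 := by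
    have e : ∀ t : ZMod p, quadraticChar (ZMod p) ((9 * t - 1) * (t - 1))
        = quadraticChar (ZMod p) ((t - 9⁻¹) * (t - 1)) := by
      intro t
      have harg : (9 * t - 1) * (t - 1) = 9 * ((t - 9⁻¹) * (t - 1)) := by
        linear_combination (t - 1) * h99
      rw [harg, map_mul, hχ9, one_mul]
    rw [Finset.sum_congr rfl fun t _ => e t]
    exact sum_chi_sub_sub hc2 9⁻¹ 1 h9i1
  have hSfg : -2 ≤ ∑ t : ZMod p,
      quadraticChar (ZMod p) ((t - 9) * (t - 1) * ((9 * t - 1) * (t - 1))) := by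
    have e1 : ∑ t : ZMod p,
        quadraticChar (ZMod p) ((t - 9) * (t - 1) * ((9 * t - 1) * (t - 1)))
        = ∑ t ∈ Finset.univ.erase (1 : ZMod p),
          quadraticChar (ZMod p) ((t - 9) * (t - 1) * ((9 * t - 1) * (t - 1))) := by
      rw [Finset.sum_erase]
      have : ((1 : ZMod p) - 9) * (1 - 1) * ((9 * 1 - 1) * (1 - 1)) = 0 := by ring
      rw [this, quadraticChar_zero]
    have e2 : ∀ t ∈ Finset.univ.erase (1 : ZMod p),
        quadraticChar (ZMod p) ((t - 9) * (t - 1) * ((9 * t - 1) * (t - 1)))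
        = quadraticChar (ZMod p) ((t - 9) * (t - 9⁻¹)) := by
      intro t ht
      have ht1 : t ≠ 1 := (Finset.mem_erase.mp ht).1
      have harg : (t - 9) * (t - 1) * ((9 * t - 1) * (t - 1))
          = (t - 9) * (t - 9⁻¹) * 9 * ((t - 1) ^ 2) := by
        linear_combination (t - 9) * (t - 1) ^ 2 * h99
      rw [harg, map_mul, map_mul, hχ9, mul_one,
        quadraticChar_sq_one' (sub_ne_zero.mpr ht1), mul_one]
    rw [e1, Finset.sum_congr rfl e2,
      Finset.sum_erase_eq_sub (Finset.mem_univ _), sum_chi_sub_sub hc2 9 9⁻¹ h9ne]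
    have := chi_le_one (((1 : ZMod p) - 9) * (1 - 9⁻¹))
    linarith
  -- the total sum
  have hT : (p : ℤ) ≤ ∑ t : ZMod p,
      (1 - quadraticChar (ZMod p) ((t - 9) * (t - 1))) *
        (1 - quadraticChar (ZMod p) ((9 * t - 1) * (t - 1))) := by
    have expand : ∀ t : ZMod p,
        (1 - quadraticChar (ZMod p) ((t - 9) * (t - 1))) *
          (1 - quadraticChar (ZMod p) ((9 * t - 1) * (t - 1)))
        = 1 - quadraticChar (ZMod p) ((t - 9) * (t - 1))
          - quadraticChar (ZMod p) ((9 * t - 1) * (t - 1))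
          + quadraticChar (ZMod p) ((t - 9) * (t - 1) * ((9 * t - 1) * (t - 1))) := by
      intro t
      rw [map_mul (quadraticChar (ZMod p)) ((t - 9) * (t - 1)) ((9 * t - 1) * (t - 1))]
      ring
    rw [Finset.sum_congr rfl fun t _ => expand t]
    rw [Finset.sum_add_distrib, Finset.sum_sub_distrib, Finset.sum_sub_distrib,
      hSf, hSg, Finset.sum_const, Finset.card_univ, ZMod.card, nsmul_eq_mul, mul_one]
    linarith
  -- the good set
  classical
  set S : Finset (ZMod p) := Finset.univ.filter (fun t =>
    quadraticChar (ZMod p) ((t - 9) * (t - 1)) = -1 ∧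
    quadraticChar (ZMod p) ((9 * t - 1) * (t - 1)) = -1) with hSdef
  set Z : Finset (ZMod p) := Finset.univ.filter (fun t =>
    (t - 9) * (t - 1) = 0 ∨ (9 * t - 1) * (t - 1) = 0) with hZdef
  have key : ∀ t : ZMod p,
      (1 - quadraticChar (ZMod p) ((t - 9) * (t - 1))) *
        (1 - quadraticChar (ZMod p) ((9 * t - 1) * (t - 1)))
      ≤ (if t ∈ S then (4 : ℤ) else 0) + (if t ∈ Z then (2 : ℤ) else 0) := by
    intro t
    by_cases hf0 : (t - 9) * (t - 1) = 0
    · have hz : t ∈ Z := Finset.mem_filter.mpr ⟨Finset.mem_univ _, Or.inl hf0⟩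
      have hχ : quadraticChar (ZMod p) ((t - 9) * (t - 1)) = 0 :=
        quadraticChar_eq_zero_iff.mpr hf0
      have hg := neg_one_le_chi (p := p) ((9 * t - 1) * (t - 1))
      rw [hχ, if_pos hz]
      split_ifs <;> linarith
    by_cases hg0 : (9 * t - 1) * (t - 1) = 0
    · have hz : t ∈ Z := Finset.mem_filter.mpr ⟨Finset.mem_univ _, Or.inr hg0⟩
      have hχ : quadraticChar (ZMod p) ((9 * t - 1) * (t - 1)) = 0 :=
        quadraticChar_eq_zero_iff.mpr hg0
      have hf := neg_one_le_chi (p := p) ((t - 9) * (t - 1))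
      rw [hχ, if_pos hz]
      split_ifs <;> linarith
    rcases quadraticChar_dichotomy hf0 with h1 | h1 <;>
      rcases quadraticChar_dichotomy hg0 with hh2 | hh2
    · rw [h1, hh2]; split_ifs <;> norm_num
    · rw [h1, hh2]; split_ifs <;> norm_num
    · rw [h1, hh2]; split_ifs <;> norm_num
    · have hs : t ∈ S := Finset.mem_filter.mpr ⟨Finset.mem_univ _, h1, hh2⟩
      rw [h1, hh2, if_pos hs]
      split_ifs <;> norm_num
  have hsum_le : ∑ t : ZMod p,
      (1 - quadraticChar (ZMod p) ((t - 9) * (t - 1))) *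
        (1 - quadraticChar (ZMod p) ((9 * t - 1) * (t - 1)))
      ≤ 4 * (S.card : ℤ) + 2 * (Z.card : ℤ) := by
    calc _ ≤ ∑ t : ZMod p, ((if t ∈ S then (4 : ℤ) else 0) + (if t ∈ Z then (2 : ℤ) else 0)) :=
          Finset.sum_le_sum fun t _ => key t
      _ = (∑ t : ZMod p, if t ∈ S then (4 : ℤ) else 0)
          + (∑ t : ZMod p, if t ∈ Z then (2 : ℤ) else 0) := Finset.sum_add_distrib
      _ = 4 * (S.card : ℤ) + 2 * (Z.card : ℤ) := by
          rw [Finset.sum_ite_mem, Finset.sum_ite_mem, Finset.univ_inter, Finset.univ_inter,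
            Finset.sum_const, Finset.sum_const, nsmul_eq_mul, nsmul_eq_mul]
          ring
  have hZ3 : Z.card ≤ 3 := by
    have hsub : Z ⊆ ({1, 9, 9⁻¹} : Finset (ZMod p)) := by
      intro t ht
      rcases (Finset.mem_filter.mp ht).2 with h | h
      · rcases mul_eq_zero.mp h with h' | h'
        · have : t = 9 := by linear_combination h'
          simp [this]
        · have : t = 1 := by linear_combination h'
          simp [this]
      · rcases mul_eq_zero.mp h with h' | h'
        · have h9t : (9 : ZMod p) * t = 1 := by linear_combination h'
          have : t = 9⁻¹ := (inv_eq_of_mul_eq_one_right h9t).symm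
          simp [this]
        · have : t = 1 := by linear_combination h'
          simp [this]
    calc Z.card ≤ ({1, 9, 9⁻¹} : Finset (ZMod p)).card := Finset.card_le_card hsub
      _ ≤ 3 := by
          refine (Finset.card_insert_le _ _).trans (Nat.add_le_add_right ?_ 1)
          refine (Finset.card_insert_le _ _).trans (Nat.add_le_add_right ?_ 1)
          simp
  have hScard : 14 ≤ S.card := by
    have h1 : (p : ℤ) ≤ 4 * (S.card : ℤ) + 2 * (Z.card : ℤ) := le_trans hT hsum_le
    have h2' : (Z.card : ℤ) ≤ 3 := by exact_mod_cast hZ3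
    have h3' : (66 : ℤ) ≤ (p : ℤ) := by exact_mod_cast hp
    have : (14 : ℤ) ≤ (S.card : ℤ) := by linarith
    exact_mod_cast this
  -- the bad set
  set B : Finset (ZMod p) := {-2, -1, 0, 1, 2, 3, 4,
    2⁻¹ * (-1), 2⁻¹ * 1, 3⁻¹ * 1, 3⁻¹ * 2, 4⁻¹ * 1, 4⁻¹ * 3} with hBdef
  have hB : B.card ≤ 13 := by
    rw [hBdef]
    refine (Finset.card_insert_le _ _).trans (Nat.add_le_add_right ?_ 1)
    refine (Finset.card_insert_le _ _).trans (Nat.add_le_add_right ?_ 1)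
    refine (Finset.card_insert_le _ _).trans (Nat.add_le_add_right ?_ 1)
    refine (Finset.card_insert_le _ _).trans (Nat.add_le_add_right ?_ 1)
    refine (Finset.card_insert_le _ _).trans (Nat.add_le_add_right ?_ 1)
    refine (Finset.card_insert_le _ _).trans (Nat.add_le_add_right ?_ 1)
    refine (Finset.card_insert_le _ _).trans (Nat.add_le_add_right ?_ 1)
    refine (Finset.card_insert_le _ _).trans (Nat.add_le_add_right ?_ 1)
    refine (Finset.card_insert_le _ _).trans (Nat.add_le_add_right ?_ 1)
    refine (Finset.card_insert_le _ _).trans (Nat.add_le_add_right ?_ 1)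
    refine (Finset.card_insert_le _ _).trans (Nat.add_le_add_right ?_ 1)
    refine (Finset.card_insert_le _ _).trans (Nat.add_le_add_right ?_ 1)
    simp
  have hnsub : ¬ S ⊆ B := fun hsub => by
    have := Finset.card_le_card hsub
    omega
  obtain ⟨t, htS, htB⟩ := Finset.not_subset.mp hnsub
  obtain ⟨-, hχf, hχg⟩ := Finset.mem_filter.mp htS
  have hleg : ∀ a : ZMod p, legSym p a = quadraticChar (ZMod p) a := by
    intro a
    rw [legSym, legendreSym, Int.cast_natCast, ZMod.natCast_zmod_val]
  have solve : ∀ k v : ZMod p, k ≠ 0 → k * t = v → t = k⁻¹ * v := by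
    intro k v hk h
    rw [← h, inv_mul_cancel_left₀ hk]
  refine ⟨t, ?_, ?_, ?_, ?_, ?_, ?_⟩
  · intro hmem
    simp only [Set.mem_insert_iff, Set.mem_singleton_iff] at hmem
    rcases hmem with rfl | rfl | rfl | rfl | rfl | rfl | rfl <;> exact htB (by simp [hBdef])
  · intro hmem
    simp only [Set.mem_insert_iff, Set.mem_singleton_iff] at hmem
    rcases hmem with h | h
    · exact htB (by rw [solve 2 (-1) h2 h]; simp [hBdef])
    · exact htB (by rw [solve 2 1 h2 h]; simp [hBdef])
  · intro hmem
    simp only [Set.mem_insert_iff, Set.mem_singleton_iff] at hmem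
    rcases hmem with h | h
    · exact htB (by rw [solve 3 1 h3 h]; simp [hBdef])
    · exact htB (by rw [solve 3 2 h3 h]; simp [hBdef])
  · intro hmem
    simp only [Set.mem_insert_iff, Set.mem_singleton_iff] at hmem
    rcases hmem with h | h
    · exact htB (by rw [solve 4 1 h4 h]; simp [hBdef])
    · exact htB (by rw [solve 4 3 h4 h]; simp [hBdef])
  · rw [hleg]; exact hχf
  · rw [hleg]; exact hχg
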